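/- Separable bilinear power allocation: for constants λ_ℓ > 0 and budgets P_S, P_D > 0, the infimum of ∑_{ℓ=1}^n 1/(λ_ℓ² ω_ℓ δ_ℓ) over ω_ℓ, δ_ℓ > 0 with ∑ ω_ℓ ≤ P_S and ∑ δ_ℓ ≤ P_D satisfies f(ω,δ) ≥ (∑_{ℓ=1}^n λ_ℓ^{−2/3})³ / (P_S P_D), with equality attained when ω_ℓ ∝ δ_ℓ ∝ λ_ℓ^{−2/3}. -/

import Mathlib

open Finset Real

lemma holder3 {n : ℕ} (a b c : Fin n → ℝ) (ha : ∀ i, 0 ≤ a i) (hb : ∀ i, 0 ≤ b i)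
    (hc : ∀ i, 0 ≤ c i) :
    (∑ i, a i * b i * c i) ^ 3 ≤
      (∑ i, a i ^ (3:ℝ)) * ((∑ i, b i ^ (3:ℝ)) * (∑ i, c i ^ (3:ℝ))) := by
  have hpq : Real.HolderConjugate 3 (3/2) := ⟨by norm_num, by norm_num, by norm_num⟩
  have h2 : Real.HolderConjugate 2 2 := ⟨by norm_num, by norm_num, by norm_num⟩
  have A0 : 0 ≤ ∑ i, a i ^ (3:ℝ) := Finset.sum_nonneg fun i _ => rpow_nonneg (ha i) _
  have B0 : 0 ≤ ∑ i, b i ^ (3:ℝ) := Finset.sum_nonneg fun i _ => rpow_nonneg (hb i) _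
  have C0 : 0 ≤ ∑ i, c i ^ (3:ℝ) := Finset.sum_nonneg fun i _ => rpow_nonneg (hc i) _
  have step1 : ∑ i, a i * (b i * c i) ≤
      (∑ i, a i ^ (3:ℝ)) ^ ((1:ℝ)/3) * (∑ i, (b i * c i) ^ ((3:ℝ)/2)) ^ ((2:ℝ)/3) := by
    have := Real.inner_le_Lp_mul_Lq_of_nonneg (s := Finset.univ) hpq
      (f := a) (g := fun i => b i * c i) (fun i _ => ha i)
      (fun i _ => mul_nonneg (hb i) (hc i))
    convert this using 3 <;> norm_num
  have step2 : ∑ i, (b i * c i) ^ ((3:ℝ)/2) ≤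
      (∑ i, b i ^ (3:ℝ)) ^ ((1:ℝ)/2) * (∑ i, c i ^ (3:ℝ)) ^ ((1:ℝ)/2) := by
    have := Real.inner_le_Lp_mul_Lq_of_nonneg (s := Finset.univ) h2
      (f := fun i => b i ^ ((3:ℝ)/2)) (g := fun i => c i ^ ((3:ℝ)/2))
      (fun i _ => rpow_nonneg (hb i) _) (fun i _ => rpow_nonneg (hc i) _)
    calc ∑ i, (b i * c i) ^ ((3:ℝ)/2)
        = ∑ i, b i ^ ((3:ℝ)/2) * c i ^ ((3:ℝ)/2) := by
          refine Finset.sum_congr rfl fun i _ => ?_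
          rw [Real.mul_rpow (hb i) (hc i)]
      _ ≤ (∑ i, (b i ^ ((3:ℝ)/2)) ^ (2:ℝ)) ^ ((1:ℝ)/2) *
          (∑ i, (c i ^ ((3:ℝ)/2)) ^ (2:ℝ)) ^ ((1:ℝ)/2) := this
      _ = (∑ i, b i ^ (3:ℝ)) ^ ((1:ℝ)/2) * (∑ i, c i ^ (3:ℝ)) ^ ((1:ℝ)/2) := by
          congr 2 <;> refine Finset.sum_congr rfl fun i _ => ?_
          · rw [← Real.rpow_mul (hb i)]; norm_num
          · rw [← Real.rpow_mul (hc i)]; norm_num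
  have key : ∑ i, a i * b i * c i ≤
      (∑ i, a i ^ (3:ℝ)) ^ ((1:ℝ)/3) * ((∑ i, b i ^ (3:ℝ)) * (∑ i, c i ^ (3:ℝ))) ^ ((1:ℝ)/3) := by
    calc ∑ i, a i * b i * c i = ∑ i, a i * (b i * c i) := by
          simp [mul_assoc]
      _ ≤ (∑ i, a i ^ (3:ℝ)) ^ ((1:ℝ)/3) * (∑ i, (b i * c i) ^ ((3:ℝ)/2)) ^ ((2:ℝ)/3) := step1
      _ ≤ (∑ i, a i ^ (3:ℝ)) ^ ((1:ℝ)/3) *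
          ((∑ i, b i ^ (3:ℝ)) ^ ((1:ℝ)/2) * (∑ i, c i ^ (3:ℝ)) ^ ((1:ℝ)/2)) ^ ((2:ℝ)/3) := by
          gcongr
          exact Finset.sum_nonneg fun i _ => rpow_nonneg (mul_nonneg (hb i) (hc i)) _
      _ = (∑ i, a i ^ (3:ℝ)) ^ ((1:ℝ)/3) *
          ((∑ i, b i ^ (3:ℝ)) * (∑ i, c i ^ (3:ℝ))) ^ ((1:ℝ)/3) := by
          rw [← Real.mul_rpow B0 C0, ← Real.rpow_mul (mul_nonneg B0 C0)]
          norm_num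
  have hL : 0 ≤ ∑ i, a i * b i * c i :=
    Finset.sum_nonneg fun i _ => mul_nonneg (mul_nonneg (ha i) (hb i)) (hc i)
  calc (∑ i, a i * b i * c i) ^ 3
      ≤ ((∑ i, a i ^ (3:ℝ)) ^ ((1:ℝ)/3) *
        ((∑ i, b i ^ (3:ℝ)) * (∑ i, c i ^ (3:ℝ))) ^ ((1:ℝ)/3)) ^ 3 := by
        exact pow_le_pow_left₀ hL key 3
    _ = (∑ i, a i ^ (3:ℝ)) * ((∑ i, b i ^ (3:ℝ)) * (∑ i, c i ^ (3:ℝ))) := by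
        rw [mul_pow, ← Real.rpow_natCast ((∑ i, a i ^ (3:ℝ)) ^ ((1:ℝ)/3)) 3,
          ← Real.rpow_mul A0,
          ← Real.rpow_natCast (((∑ i, b i ^ (3:ℝ)) * (∑ i, c i ^ (3:ℝ))) ^ ((1:ℝ)/3)) 3,
          ← Real.rpow_mul (mul_nonneg B0 C0)]
        norm_num

theorem stmt18 (n : ℕ) (hn : 1 ≤ n) (lam : Fin n → ℝ) (hlam : ∀ ℓ, 0 < lam ℓ)
    (PS PD : ℝ) (hPS : 0 < PS) (hPD : 0 < PD)
    (ω δ : Fin n → ℝ)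
    (hω : ω = fun ℓ => PS * lam ℓ ^ (-(2 : ℝ) / 3) / ∑ k, lam k ^ (-(2 : ℝ) / 3))
    (hδ : δ = fun ℓ => PD * lam ℓ ^ (-(2 : ℝ) / 3) / ∑ k, lam k ^ (-(2 : ℝ) / 3)) :
    (∀ w v : Fin n → ℝ, (∀ ℓ, 0 < w ℓ) → (∀ ℓ, 0 < v ℓ) →
        (∑ ℓ, w ℓ) ≤ PS → (∑ ℓ, v ℓ) ≤ PD →
        (∑ ℓ, lam ℓ ^ (-(2 : ℝ) / 3)) ^ 3 / (PS * PD) ≤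
          ∑ ℓ, 1 / (lam ℓ ^ 2 * w ℓ * v ℓ)) ∧
      (∀ ℓ, 0 < ω ℓ) ∧ (∀ ℓ, 0 < δ ℓ) ∧ (∑ ℓ, ω ℓ) ≤ PS ∧ (∑ ℓ, δ ℓ) ≤ PD ∧
      ∑ ℓ, 1 / (lam ℓ ^ 2 * ω ℓ * δ ℓ) =
        (∑ ℓ, lam ℓ ^ (-(2 : ℝ) / 3)) ^ 3 / (PS * PD) := by
  have hne : Nonempty (Fin n) := Fin.pos_iff_nonempty.mp hn
  set s : Fin n → ℝ := fun ℓ => lam ℓ ^ (-(2 : ℝ) / 3) with hs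
  have hspos : ∀ ℓ, 0 < s ℓ := fun ℓ => Real.rpow_pos_of_pos (hlam ℓ) _
  set S : ℝ := ∑ k, s k with hSdef
  have hS : 0 < S := Finset.sum_pos (fun i _ => hspos i) Finset.univ_nonempty
  have key : ∀ ℓ, lam ℓ ^ 2 * (s ℓ * s ℓ * s ℓ) = 1 := by
    intro ℓ
    rw [hs, ← Real.rpow_add (hlam ℓ), ← Real.rpow_add (hlam ℓ),
      ← Real.rpow_natCast (lam ℓ) 2, ← Real.rpow_add (hlam ℓ)]
    norm_num
  have cube : ∀ x : ℝ, 0 ≤ x → (x ^ ((1:ℝ)/3)) ^ (3:ℝ) = x := by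
    intro x hx
    rw [← Real.rpow_mul hx]
    norm_num
  refine ⟨?_, ?_, ?_, ?_, ?_, ?_⟩
  · intro w v hw hv hws hvs
    have hwpos : 0 < ∑ ℓ, w ℓ := Finset.sum_pos (fun i _ => hw i) Finset.univ_nonempty
    have hvpos : 0 < ∑ ℓ, v ℓ := Finset.sum_pos (fun i _ => hv i) Finset.univ_nonempty
    have hT : ∀ ℓ, 0 < 1 / (lam ℓ ^ 2 * w ℓ * v ℓ) := by
      intro ℓ
      have h1 := hlam ℓ; have h2 := hw ℓ; have h3 := hv ℓ
      positivity
    have hTsum : 0 ≤ ∑ ℓ, 1 / (lam ℓ ^ 2 * w ℓ * v ℓ) :=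
      Finset.sum_nonneg fun i _ => (hT i).le
    have H := holder3 (fun ℓ => w ℓ ^ ((1:ℝ)/3)) (fun ℓ => v ℓ ^ ((1:ℝ)/3))
      (fun ℓ => (1 / (lam ℓ ^ 2 * w ℓ * v ℓ)) ^ ((1:ℝ)/3))
      (fun i => Real.rpow_nonneg (hw i).le _) (fun i => Real.rpow_nonneg (hv i).le _)
      (fun i => Real.rpow_nonneg (hT i).le _)
    have habc : ∀ ℓ, w ℓ ^ ((1:ℝ)/3) * v ℓ ^ ((1:ℝ)/3) *
        (1 / (lam ℓ ^ 2 * w ℓ * v ℓ)) ^ ((1:ℝ)/3) = s ℓ := by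
      intro ℓ
      rw [← Real.mul_rpow (hw ℓ).le (hv ℓ).le,
        ← Real.mul_rpow (mul_nonneg (hw ℓ).le (hv ℓ).le) (hT ℓ).le]
      have hmain : w ℓ * v ℓ * (1 / (lam ℓ ^ 2 * w ℓ * v ℓ)) = s ℓ ^ (3:ℕ) := by
        have hl := hlam ℓ; have h2 := hw ℓ; have h3 := hv ℓ
        have h1 : lam ℓ ^ 2 * w ℓ * v ℓ ≠ 0 := by positivity
        field_simp
        linear_combination (-1) * key ℓ
      rw [hmain, ← Real.rpow_natCast (s ℓ) 3, ← Real.rpow_mul (hspos ℓ).le]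
      norm_num
    rw [Finset.sum_congr rfl (fun i _ => habc i),
      Finset.sum_congr rfl (fun i _ => cube (w i) (hw i).le),
      Finset.sum_congr rfl (fun i _ => cube (v i) (hv i).le),
      Finset.sum_congr rfl (fun i _ => cube _ (hT i).le)] at H
    rw [div_le_iff₀ (by positivity)]
    calc S ^ 3 ≤ (∑ ℓ, w ℓ) * ((∑ ℓ, v ℓ) * ∑ ℓ, 1 / (lam ℓ ^ 2 * w ℓ * v ℓ)) := H
      _ ≤ PS * (PD * ∑ ℓ, 1 / (lam ℓ ^ 2 * w ℓ * v ℓ)) := by gcongr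
      _ = (∑ ℓ, 1 / (lam ℓ ^ 2 * w ℓ * v ℓ)) * (PS * PD) := by ring
  · intro ℓ; rw [hω]; have := hspos ℓ; positivity
  · intro ℓ; rw [hδ]; have := hspos ℓ; positivity
  · rw [hω]
    simp only [← Finset.sum_div, ← Finset.mul_sum]
    rw [← hSdef, mul_div_assoc, div_self hS.ne', mul_one]
  · rw [hδ]
    simp only [← Finset.sum_div, ← Finset.mul_sum]
    rw [← hSdef, mul_div_assoc, div_self hS.ne', mul_one]
  · have hterm : ∀ ℓ, 1 / (lam ℓ ^ 2 * ω ℓ * δ ℓ) = S ^ 2 * s ℓ / (PS * PD) := by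
      intro ℓ
      rw [hω, hδ]
      show 1 / (lam ℓ ^ 2 * (PS * s ℓ / S) * (PD * s ℓ / S)) = S ^ 2 * s ℓ / (PS * PD)
      have hl := hlam ℓ; have hsp := hspos ℓ
      rw [div_eq_div_iff (by positivity) (by positivity)]
      field_simp
      linear_combination (-1) * key ℓ
    rw [Finset.sum_congr rfl (fun i _ => hterm i)]
    rw [← Finset.sum_div, ← Finset.mul_sum, ← hSdef]
    ring
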